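/- Let f be a natural number, a ≤ b real numbers, S a finite multiset of real numbers with card S ≥ 2f+1, and T a sub-multiset of S with card S − card T ≤ f such that every element of T lies in the closed interval [a, b]. Let v be a real number with a ≤ v ≤ b. Let S' be the multiset obtained from S by removing the f largest elements and removing the f smallest elements. Then every element of S' lies in [a, b], and the average (v + Σ_{w ∈ S'} w) / (card S' + 1) lies in [a, b]. -/

import Mathlib

/-- The multiset obtained from `S` by removing its `k` largest elements (the last
`min k (card S)` entries of the ascending sorted list of `S`). -/
noncomputable def Multiset.removeLargest (S : Multiset ℝ) (k : ℕ) : Multiset ℝ :=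
  ((S.sort (· ≤ ·)).take ((S.sort (· ≤ ·)).length - k) : List ℝ)

/-- The multiset obtained from `S` by removing its `k` smallest elements (the first
`min k (card S)` entries of the ascending sorted list of `S`). -/
noncomputable def Multiset.removeSmallest (S : Multiset ℝ) (k : ℕ) : Multiset ℝ :=
  ((S.sort (· ≤ ·)).drop k : List ℝ)

/-- Any sub-multiset of `S` with more than `f` elements meets `T`. -/
lemma key_meet (f : ℕ) (S T : Multiset ℝ) (hTS : T ≤ S) (hf : S.card - T.card ≤ f)
    (M : Multiset ℝ) (hM : M ≤ S) (hcard : f + 1 ≤ M.card) :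
    ∃ x ∈ M, x ∈ T := by
  have h1 : M - T ≤ S - T := tsub_le_tsub_right hM T
  have h2 : (S - T).card = S.card - T.card := Multiset.card_sub hTS
  have h3 : (M - T).card ≤ f := by
    have := Multiset.card_le_card h1
    omega
  have hMT : M ∩ T = M - (M - T) := by
    ext x
    simp only [Multiset.count_inter, Multiset.count_sub]
    omega
  have h4 : 1 ≤ (M ∩ T).card := by
    rw [hMT, Multiset.card_sub (Multiset.sub_le_self M T)]
    omega
  obtain ⟨x, hx⟩ := Multiset.card_pos_iff_exists_mem.mp h4
  exact ⟨x, Multiset.mem_inter.mp hx |>.1, Multiset.mem_inter.mp hx |>.2⟩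

theorem stmt_2 (f : ℕ) (a b : ℝ) (hab : a ≤ b) (S T : Multiset ℝ)
    (hScard : 2 * f + 1 ≤ S.card) (hTS : T ≤ S) (hf : S.card - T.card ≤ f)
    (hT : ∀ x ∈ T, x ∈ Set.Icc a b) (v : ℝ) (hv : a ≤ v) (hv' : v ≤ b) :
    (∀ w ∈ (S.removeLargest f).removeSmallest f, w ∈ Set.Icc a b) ∧
    (v + ((S.removeLargest f).removeSmallest f).sum) /
        (((S.removeLargest f).removeSmallest f).card + 1) ∈ Set.Icc a b := by
  classical
  set L : List ℝ := S.sort (· ≤ ·) with hLdef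
  have hLsorted : L.Pairwise (· ≤ ·) := Multiset.pairwise_sort _ _
  have hLS : (L : Multiset ℝ) = S := Multiset.sort_eq _ _
  set n : ℕ := L.length with hndef
  have hn : n = S.card := by rw [hndef, hLdef]; exact Multiset.length_sort _
  -- the sorted list of removeLargest
  set L₁ : List ℝ := L.take (n - f) with hL₁def
  have hS₁ : S.removeLargest f = (L₁ : Multiset ℝ) := rfl
  have hL₁sorted : L₁.Pairwise (· ≤ ·) := hLsorted.sublist (List.take_sublist _ _)
  have hsortL₁ : (S.removeLargest f).sort (· ≤ ·) = L₁ := by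
    refine List.Perm.eq_of_pairwise' (Multiset.pairwise_sort _ _) hL₁sorted ?_
    rw [← Multiset.coe_eq_coe, Multiset.sort_eq, hS₁]
  have hS' : (S.removeLargest f).removeSmallest f = ((L₁.drop f : List ℝ) : Multiset ℝ) := by
    rw [Multiset.removeSmallest, hsortL₁]
  -- sorted index monotonicity
  have hmono : ∀ (i j : ℕ) (hi : i < n) (hj : j < n), i ≤ j → L[i] ≤ L[j] := by
    intro i j hi hj hij
    exact hLsorted.rel_get_of_le (a := ⟨i, hi⟩) (b := ⟨j, hj⟩) hij
  -- every element of S' is in [a,b]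
  have hmem : ∀ w ∈ (S.removeLargest f).removeSmallest f, w ∈ Set.Icc a b := by
    intro w hw
    rw [hS', Multiset.mem_coe] at hw
    obtain ⟨j, hj, hjw⟩ := List.getElem_of_mem hw
    have hjlen : j < n - 2 * f := by
      have := hj
      rw [List.length_drop, hL₁def, List.length_take] at this
      omega
    have hidx : f + j < n := by omega
    have hw' : w = L[f + j] := by
      rw [← hjw]; simp [hL₁def, List.getElem_drop, List.getElem_take]
    -- lower bound
    have hlow : a ≤ w := by
      obtain ⟨x, hxM, hxT⟩ := key_meet f S T hTS hf (↑(L.take (f + 1))) (by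
        rw [← hLS]; exact (List.take_sublist _ _).subperm) (by
        simp only [Multiset.coe_card, List.length_take]; omega)
      obtain ⟨k, hk, hkx⟩ := List.getElem_of_mem (Multiset.mem_coe.mp hxM)
      rw [List.length_take] at hk
      have hkn : k < n := by omega
      have hkx' : x = L[k] := by rw [← hkx]; simp [List.getElem_take]
      have : x ≤ w := by
        rw [hkx', hw']; exact hmono k (f + j) hkn hidx (by omega)
      exact le_trans (hT x hxT).1 this
    -- upper bound
    have hhigh : w ≤ b := by
      obtain ⟨x, hxM, hxT⟩ := key_meet f S T hTS hf (↑(L.drop (n - (f + 1)))) (by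
        rw [← hLS]; exact (List.drop_sublist _ _).subperm) (by
        simp only [Multiset.coe_card, List.length_drop]; omega)
      obtain ⟨k, hk, hkx⟩ := List.getElem_of_mem (Multiset.mem_coe.mp hxM)
      rw [List.length_drop] at hk
      have hkx' : x = L[n - (f + 1) + k] := by rw [← hkx, List.getElem_drop]
      have : w ≤ x := by
        rw [hkx', hw']; exact hmono (f + j) (n - (f + 1) + k) hidx (by omega) (by omega)
      exact le_trans this (hT x hxT).2
    exact ⟨hlow, hhigh⟩
  refine ⟨hmem, ?_, ?_⟩
  · set S' := (S.removeLargest f).removeSmallest f with hS'def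
    have hsum : (S'.card : ℝ) * a ≤ S'.sum := by
      have := Multiset.card_nsmul_le_sum (s := S') (a := a) (fun x hx => (hmem x hx).1)
      rwa [nsmul_eq_mul] at this
    rw [le_div_iff₀ (by positivity)]
    nlinarith [hsum]
  · set S' := (S.removeLargest f).removeSmallest f with hS'def
    have hsum : S'.sum ≤ (S'.card : ℝ) * b := by
      have := Multiset.sum_le_card_nsmul (s := S') (n := b) (fun x hx => (hmem x hx).2)
      rwa [nsmul_eq_mul] at this
    rw [div_le_iff₀ (by positivity)]
    nlinarith [hsum]
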